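/- arXiv:0904.2342 — 4 statements merged into one kernel-verified Lean document; each statement's English description precedes it below -/
import Mathlib

section
/- Let X be a real Banach space, J : X → X nonexpansive, and Φ(λ,x) = λ J(((1−λ)/λ) x) for λ ∈ (0,1], with v_λ the unique fixed point of Φ(λ,·). Assume hypothesis (H): there is a constant C ≥ 0 with ‖Φ(λ,x) − Φ(μ,x)‖ ≤ |λ − μ|(C + ‖x‖) for all x ∈ X and λ, μ ∈ (0,1]; let C' = sup_{λ ∈ (0,1]} ‖v_λ‖ (finite, bounded by ‖J(0)‖). Let λ̄ : [0,∞) → (0,1] be continuously differentiable and define L(t) = e^{∫_0^t ( |λ̄'(s)|/λ̄(s) − λ̄(s) ) ds}. If u : [0,∞) → X is differentiable and satisfies u'(t) = Φ(λ̄(t), u(t)) − u(t) for all t ≥ 0, then for every t ≥ 0, ‖u(t) − v_{λ̄(t)}‖ ≤ (L(t)/λ̄(t)) · ( ‖u'(0)‖ + (C + C') ∫_0^t |λ̄'(s)|/L(s) ds ). -/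
open intervalIntegral

open Set Filter MeasureTheory Topology

set_option maxHeartbeats 1000000 in
/-- under hypothesis (H), for a C¹ parametrization `λ̄ : [0,∞) → (0,1]`
and `L(t) = e^{∫_0^t (|λ̄'|/λ̄ - λ̄)}`, any solution `u` of
`u'(t) = Φ(λ̄(t),u(t)) - u(t)` satisfies
`‖u(t) - v_{λ̄(t)}‖ ≤ (L(t)/λ̄(t)) (‖u'(0)‖ + (C + C') ∫_0^t |λ̄'(s)|/L(s) ds)`,
where `Φ(λ,x) = λ J(((1-λ)/λ)x)`, `v_λ` is its fixed point, and
`C' = sup_{λ ∈ (0,1]} ‖v_λ‖`. -/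
theorem slow_parametrization_inequality
    {X : Type*} [NormedAddCommGroup X] [NormedSpace ℝ X] [CompleteSpace X]
    (J : X → X) (hJ : ∀ x y : X, ‖J x - J y‖ ≤ ‖x - y‖)
    (v : ℝ → X)
    (hv : ∀ lam ∈ Set.Ioc (0 : ℝ) 1,
      lam • J (((1 - lam) / lam) • v lam) = v lam)
    (C : ℝ) (hC : 0 ≤ C)
    (hH : ∀ (x : X), ∀ lam ∈ Set.Ioc (0 : ℝ) 1, ∀ mu ∈ Set.Ioc (0 : ℝ) 1,
      ‖lam • J (((1 - lam) / lam) • x) - mu • J (((1 - mu) / mu) • x)‖ ≤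
        |lam - mu| * (C + ‖x‖))
    (C' : ℝ) (hC' : C' = ⨆ lam : Set.Ioc (0 : ℝ) 1, ‖v (lam : ℝ)‖)
    (lamb lamb' : ℝ → ℝ)
    (hlamb : ∀ t ≥ (0 : ℝ), lamb t ∈ Set.Ioc (0 : ℝ) 1)
    (hlambd : ∀ t ≥ (0 : ℝ), HasDerivAt lamb (lamb' t) t)
    (hlambd' : ContinuousOn lamb' (Set.Ici (0 : ℝ)))
    (L : ℝ → ℝ)
    (hL : ∀ t : ℝ, L t = Real.exp (∫ s in (0 : ℝ)..t, (|lamb' s| / lamb s - lamb s)))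
    (u : ℝ → X)
    (hu : ∀ t ≥ (0 : ℝ),
      HasDerivAt u (lamb t • J (((1 - lamb t) / lamb t) • u t) - u t) t) :
    ∀ t ≥ (0 : ℝ),
      ‖u t - v (lamb t)‖ ≤ (L t / lamb t) *
        (‖lamb 0 • J (((1 - lamb 0) / lamb 0) • u 0) - u 0‖ +
          (C + C') * ∫ s in (0 : ℝ)..t, |lamb' s| / L s) := by
  -- boundedness of the fixed-point family and `C'`
  have hvb : ∀ l ∈ Set.Ioc (0 : ℝ) 1, ‖v l‖ ≤ ‖J 0‖ := by
    intro l hl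
    have h1 : ‖v l - l • J 0‖ ≤ (1 - l) * ‖v l‖ := by
      calc ‖v l - l • J 0‖ = ‖l • J (((1 - l) / l) • v l) - l • J ((0:ℝ) • (0:X))‖ := by
            rw [hv l hl]; simp
        _ = l * ‖J (((1 - l) / l) • v l) - J ((0:ℝ) • (0:X))‖ := by
            rw [← smul_sub, norm_smul, Real.norm_eq_abs, abs_of_pos hl.1]
        _ ≤ l * ‖((1 - l) / l) • v l - (0:ℝ) • (0:X)‖ := by
            exact mul_le_mul_of_nonneg_left (hJ _ _) hl.1.le
        _ = l * ((1 - l) / l * ‖v l‖) := by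
            rw [zero_smul, sub_zero, norm_smul, Real.norm_eq_abs,
              abs_of_nonneg (div_nonneg (by linarith [hl.2]) hl.1.le)]
        _ = (1 - l) * ‖v l‖ := by rw [← mul_assoc, mul_div_cancel₀ _ hl.1.ne']
    have h2 : ‖v l‖ - ‖l • J 0‖ ≤ (1 - l) * ‖v l‖ :=
      le_trans (norm_sub_norm_le _ _) h1
    have h3 : ‖l • J 0‖ = l * ‖J 0‖ := by
      rw [norm_smul, Real.norm_eq_abs, abs_of_pos hl.1]
    nlinarith [hl.1, norm_nonneg (v l)]
  have hbdd : BddAbove (Set.range fun lam : Set.Ioc (0 : ℝ) 1 => ‖v (lam : ℝ)‖) := by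
    refine ⟨‖J 0‖, ?_⟩
    rintro x ⟨l, rfl⟩
    exact hvb l l.2
  have hC'ub : ∀ l ∈ Set.Ioc (0 : ℝ) 1, ‖v l‖ ≤ C' := by
    intro l hl
    rw [hC']
    exact le_ciSup hbdd (⟨l, hl⟩ : Set.Ioc (0:ℝ) 1)
  have hC'0 : (0 : ℝ) ≤ C' :=
    le_trans (norm_nonneg _) (hC'ub 1 ⟨one_pos, le_refl 1⟩)
  
  -- main part
  intro T hT
  set w : ℝ → X := fun t => lamb t • J (((1 - lamb t) / lamb t) • u t) - u t with hw
  set g : ℝ → ℝ := fun t => ‖w t‖ with hgdef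
  -- contraction property of Φ(l, ·)
  have hcontr : ∀ l ∈ Set.Ioc (0:ℝ) 1, ∀ x y : X,
      ‖l • J (((1 - l) / l) • x) - l • J (((1 - l) / l) • y)‖ ≤ (1 - l) * ‖x - y‖ := by
    intro l hl x y
    calc ‖l • J (((1 - l) / l) • x) - l • J (((1 - l) / l) • y)‖
        = l * ‖J (((1 - l) / l) • x) - J (((1 - l) / l) • y)‖ := by
          rw [← smul_sub, norm_smul, Real.norm_eq_abs, abs_of_pos hl.1]
      _ ≤ l * ‖((1 - l) / l) • x - ((1 - l) / l) • y‖ :=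
          mul_le_mul_of_nonneg_left (hJ _ _) hl.1.le
      _ = l * ((1 - l) / l * ‖x - y‖) := by
          rw [← smul_sub, norm_smul, Real.norm_eq_abs,
            abs_of_nonneg (div_nonneg (by linarith [hl.2]) hl.1.le)]
      _ = (1 - l) * ‖x - y‖ := by rw [← mul_assoc, mul_div_cancel₀ _ hl.1.ne']
  -- key pointwise estimate:  lamb t * ‖u t - v (lamb t)‖ ≤ g t
  have hkey : ∀ t ≥ (0:ℝ), lamb t * ‖u t - v (lamb t)‖ ≤ g t := by
    intro t ht
    have hlt := hlamb t ht
    have h2 : ‖lamb t • J (((1 - lamb t) / lamb t) • u t) - v (lamb t)‖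
        ≤ (1 - lamb t) * ‖u t - v (lamb t)‖ := by
      calc ‖lamb t • J (((1 - lamb t) / lamb t) • u t) - v (lamb t)‖
          = ‖lamb t • J (((1 - lamb t) / lamb t) • u t)
              - lamb t • J (((1 - lamb t) / lamb t) • v (lamb t))‖ := by
            rw [hv (lamb t) hlt]
        _ ≤ (1 - lamb t) * ‖u t - v (lamb t)‖ := hcontr (lamb t) hlt _ _
    have h1 : ‖u t - v (lamb t)‖ ≤ g t + (1 - lamb t) * ‖u t - v (lamb t)‖ := by
      have htri : ‖u t - v (lamb t)‖ ≤
          ‖u t - (lamb t • J (((1 - lamb t) / lamb t) • u t))‖ +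
          ‖lamb t • J (((1 - lamb t) / lamb t) • u t) - v (lamb t)‖ := by
        have := dist_triangle (u t) (lamb t • J (((1 - lamb t) / lamb t) • u t)) (v (lamb t))
        simpa [dist_eq_norm] using this
      have hg : ‖u t - (lamb t • J (((1 - lamb t) / lamb t) • u t))‖ = g t := by
        rw [hgdef, hw]; exact norm_sub_rev _ _
      linarith
    linarith
  have hgnn : ∀ t, 0 ≤ g t := fun t => norm_nonneg _
  have hnormu : ∀ t ≥ (0:ℝ), ‖u t‖ ≤ g t / lamb t + C' := by
    intro t ht
    have hlt := hlamb t ht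
    have h1 : ‖u t - v (lamb t)‖ ≤ g t / lamb t := by
      rw [le_div_iff₀ hlt.1, mul_comm]; exact hkey t ht
    have h2 : ‖v (lamb t)‖ ≤ C' := hC'ub _ hlt
    calc ‖u t‖ = ‖(u t - v (lamb t)) + v (lamb t)‖ := by rw [sub_add_cancel]
      _ ≤ ‖u t - v (lamb t)‖ + ‖v (lamb t)‖ := norm_add_le _ _
      _ ≤ g t / lamb t + C' := add_le_add h1 h2
  -- continuity of everything in sight
  have hJc : Continuous J := by
    have : LipschitzWith 1 J := by
      apply LipschitzWith.of_dist_le_mul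
      intro x y
      simpa [dist_eq_norm] using hJ x y
    exact this.continuous
  have hlambcont : ContinuousOn lamb (Set.Ici 0) :=
    fun t ht => ((hlambd t ht).continuousAt).continuousWithinAt
  have hwcont : ∀ t ≥ (0:ℝ), ContinuousAt w t := by
    intro t ht
    have hl := (hlambd t ht).continuousAt
    have hu' := (hu t ht).continuousAt
    have h1 : ContinuousAt (fun t => ((1 - lamb t) / lamb t) • u t) t :=
      ((continuousAt_const.sub hl).div hl (hlamb t ht).1.ne').smul hu'
    exact (hl.smul (hJc.continuousAt.comp h1)).sub hu'
  have hgcont : ContinuousOn g (Set.Icc 0 T) := by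
    intro t ht
    exact ((hwcont t ht.1).norm).continuousWithinAt
  -- the coefficient k and the function L
  set k : ℝ → ℝ := fun s => |lamb' s| / lamb s - lamb s with hkdef
  have hkcont : ContinuousOn k (Set.Ici 0) :=
    (hlambd'.abs.div hlambcont (fun x hx => (hlamb x hx).1.ne')).sub hlambcont
  have hkint : ∀ b ≥ (0:ℝ), IntervalIntegrable k MeasureTheory.volume 0 b := by
    intro b hb
    apply ContinuousOn.intervalIntegrable
    rw [Set.uIcc_of_le hb]
    exact hkcont.mono Set.Icc_subset_Ici_self
  set P : ℝ → ℝ := fun t => ∫ s in (0:ℝ)..t, k s with hPdef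
  have hLP : ∀ t, L t = Real.exp (P t) := fun t => hL t
  have hPderiv : ∀ x ≥ (0:ℝ), HasDerivWithinAt P (k x) (Set.Ici x) x := by
    intro x hx
    refine intervalIntegral.integral_hasDerivWithinAt_right (hkint x hx)
      ⟨Set.Ici 0, ?_, hkcont.aestronglyMeasurable measurableSet_Ici⟩ ?_
    · exact Filter.mem_of_superset self_mem_nhdsWithin
        (fun z hz => le_trans hx (le_of_lt hz))
    · exact (hkcont x hx).mono (fun z hz => le_trans hx (le_of_lt hz))
  have hPcont : ContinuousOn P (Set.Ici 0) := by
    intro x hx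
    have h1 : ContinuousOn P (Set.uIcc 0 (x+1)) :=
      intervalIntegral.continuousOn_primitive_interval' (hkint (x+1) (by linarith [hx.out]))
        (by rw [Set.uIcc_of_le (by linarith [hx.out] : (0:ℝ) ≤ x + 1)]
            exact Set.left_mem_Icc.2 (by linarith [hx.out]))
    have hx1 : x ∈ Set.uIcc 0 (x+1) := by
      rw [Set.uIcc_of_le (by linarith [hx.out] : (0:ℝ) ≤ x + 1)]
      exact ⟨hx.out, by linarith⟩
    refine (h1 x hx1).mono_of_mem_nhdsWithin ?_
    rw [Set.uIcc_of_le (by linarith [hx.out] : (0:ℝ) ≤ x + 1)]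
    have : Set.Icc 0 (x+1) = Set.Ici 0 ∩ Set.Iic (x+1) := (Set.Ici_inter_Iic).symm
    rw [this]
    exact Filter.inter_mem self_mem_nhdsWithin
      (mem_nhdsWithin_of_mem_nhds (Iic_mem_nhds (lt_add_one x)))
  have hLpos : ∀ t, 0 < L t := fun t => (hLP t) ▸ Real.exp_pos _
  have hLcont : ContinuousOn L (Set.Ici 0) := by
    have : L = fun t => Real.exp (P t) := funext hLP
    rw [this]
    exact Real.continuous_exp.comp_continuousOn hPcont
  have hLderiv : ∀ x ≥ (0:ℝ), HasDerivWithinAt L (L x * k x) (Set.Ici x) x := by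
    intro x hx
    have : L = fun t => Real.exp (P t) := funext hLP
    rw [this]
    simpa [hLP, mul_comm] using (hPderiv x hx).exp
  have hL0 : L 0 = 1 := by
    rw [hLP, hPdef]; simp
  -- the integral I
  set q : ℝ → ℝ := fun s => |lamb' s| / L s with hqdef
  have hqcont : ContinuousOn q (Set.Ici 0) :=
    hlambd'.abs.div hLcont (fun x _ => (hLpos x).ne')
  have hqint : ∀ b ≥ (0:ℝ), IntervalIntegrable q MeasureTheory.volume 0 b := by
    intro b hb
    apply ContinuousOn.intervalIntegrable
    rw [Set.uIcc_of_le hb]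
    exact hqcont.mono Set.Icc_subset_Ici_self
  set I : ℝ → ℝ := fun t => ∫ s in (0:ℝ)..t, q s with hIdef
  have hIderiv : ∀ x ≥ (0:ℝ), HasDerivWithinAt I (q x) (Set.Ici x) x := by
    intro x hx
    refine intervalIntegral.integral_hasDerivWithinAt_right (hqint x hx)
      ⟨Set.Ici 0, ?_, hqcont.aestronglyMeasurable measurableSet_Ici⟩ ?_
    · exact Filter.mem_of_superset self_mem_nhdsWithin
        (fun z hz => le_trans hx (le_of_lt hz))
    · exact (hqcont x hx).mono (fun z hz => le_trans hx (le_of_lt hz))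
  have hIcont : ContinuousOn I (Set.Ici 0) := by
    intro x hx
    have h1 : ContinuousOn I (Set.uIcc 0 (x+1)) :=
      intervalIntegral.continuousOn_primitive_interval' (hqint (x+1) (by linarith [hx.out]))
        (by rw [Set.uIcc_of_le (by linarith [hx.out] : (0:ℝ) ≤ x + 1)]
            exact Set.left_mem_Icc.2 (by linarith [hx.out]))
    have hx1 : x ∈ Set.uIcc 0 (x+1) := by
      rw [Set.uIcc_of_le (by linarith [hx.out] : (0:ℝ) ≤ x + 1)]
      exact ⟨hx.out, by linarith⟩
    refine (h1 x hx1).mono_of_mem_nhdsWithin ?_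
    rw [Set.uIcc_of_le (by linarith [hx.out] : (0:ℝ) ≤ x + 1)]
    have : Set.Icc 0 (x+1) = Set.Ici 0 ∩ Set.Iic (x+1) := (Set.Ici_inter_Iic).symm
    rw [this]
    exact Filter.inter_mem self_mem_nhdsWithin
      (mem_nhdsWithin_of_mem_nhds (Iic_mem_nhds (lt_add_one x)))
  have hI0 : I 0 = 0 := by rw [hIdef]; simp
  -- the slope estimate
  have hslope : ∀ x ∈ Set.Ico (0:ℝ) T, ∀ r,
      k x * g x + |lamb' x| * (C + C') < r →
      ∃ᶠ z in nhdsWithin x (Set.Ioi x), slope g x z < r := by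
    intro x hx r hr
    have hx0 : (0:ℝ) ≤ x := hx.1
    have hlx := hlamb x hx0
    have hlne : lamb x ≠ 0 := hlx.1.ne'
    have hc00 : 0 ≤ ‖u x‖ := norm_nonneg _
    have hbase : -(lamb x * g x) + |lamb' x| * (C + ‖u x‖) < r := by
      have h1 : ‖u x‖ ≤ g x / lamb x + C' := hnormu x hx0
      have h2 : |lamb' x| * (C + ‖u x‖) ≤ |lamb' x| * (C + C') + |lamb' x| * (g x / lamb x) := by
        have h3 := mul_le_mul_of_nonneg_left h1 (abs_nonneg (lamb' x))
        have e1 : |lamb' x| * (C + ‖u x‖) = |lamb' x| * C + |lamb' x| * ‖u x‖ := by ring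
        have e2 : |lamb' x| * (g x / lamb x + C')
            = |lamb' x| * (g x / lamb x) + |lamb' x| * C' := by ring
        have e3 : |lamb' x| * (C + C') = |lamb' x| * C + |lamb' x| * C' := by ring
        linarith
      have hkx : k x = |lamb' x| / lamb x - lamb x := rfl
      have hk' : k x * g x = |lamb' x| * (g x / lamb x) - lamb x * g x := by
        rw [hkx]; field_simp
      rw [hk'] at hr
      linarith
    set F : ℝ → ℝ := fun η => (1 - lamb x + η) * (g x + η) + (|lamb' x| + η) * (C + ‖u x‖) + η - g x
      with hFdef
    have hF0 : F 0 = -(lamb x * g x) + |lamb' x| * (C + ‖u x‖) := by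
      show (1 - lamb x + 0) * (g x + 0) + (|lamb' x| + 0) * (C + ‖u x‖) + 0 - g x = _
      ring
    have hFc : Continuous F := by rw [hFdef]; fun_prop
    obtain ⟨η, hηr, hη0⟩ : ∃ η, F η < r ∧ η ∈ Set.Ioi (0:ℝ) := by
      have h1 : ∀ᶠ η in nhds (0:ℝ), F η < r :=
        Filter.Tendsto.eventually_lt_const (hF0 ▸ hbase) hFc.continuousAt
      exact ((h1.filter_mono (nhdsWithin_le_nhds (s := Set.Ioi (0:ℝ)))).and
        eventually_mem_nhdsWithin).exists
    have hη0' : (0:ℝ) < η := hη0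
    have hux : HasDerivAt u (w x) x := hu x hx0
    have e1 : ∀ᶠ z in nhds x, ‖u z - u x - (z - x) • w x‖ ≤ η * ‖z - x‖ :=
      (hasDerivAt_iff_isLittleO.1 hux).def hη0'
    have e2 : ∀ᶠ z in nhds x, ‖lamb z - lamb x - (z - x) • lamb' x‖ ≤ η * ‖z - x‖ :=
      (hasDerivAt_iff_isLittleO.1 (hlambd x hx0)).def hη0'
    have e3 : ∀ᶠ z in nhds x, |lamb z - lamb x| < η := by
      have h2 := Metric.tendsto_nhds.1 (hlambd x hx0).continuousAt η hη0'
      simpa [Real.dist_eq] using h2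
    have e5 : ∀ᶠ z in nhds x, z < x + 1 := eventually_lt_nhds (lt_add_one x)
    have hev : ∀ᶠ z in nhdsWithin x (Set.Ioi x), slope g x z < r := by
      filter_upwards [e1.filter_mono nhdsWithin_le_nhds, e2.filter_mono nhdsWithin_le_nhds,
        e3.filter_mono nhdsWithin_le_nhds, e5.filter_mono nhdsWithin_le_nhds,
        self_mem_nhdsWithin] with z h1 h2 h3 h5 hzx
      have hzx' : x < z := hzx
      have hh0 : 0 < z - x := sub_pos.2 hzx'
      have hh1 : z - x ≤ 1 := by linarith
      have hz0 : (0:ℝ) ≤ z := le_trans hx0 hzx'.le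
      have hlz := hlamb z hz0
      rw [Real.norm_eq_abs, abs_of_pos hh0] at h1
      simp only [Real.norm_eq_abs, smul_eq_mul] at h2
      rw [abs_of_pos hh0] at h2
      have hgx : g x = ‖w x‖ := rfl
      have a1 : ‖u z - u x‖ ≤ (z - x) * (g x + η) := by
        have hdecomp : u z - u x = (z - x) • w x + (u z - u x - (z - x) • w x) := by abel
        rw [hdecomp]
        refine le_trans (norm_add_le _ _) ?_
        rw [norm_smul, Real.norm_eq_abs, abs_of_pos hh0, hgx]
        have e1 : (z - x) * (‖w x‖ + η) = (z - x) * ‖w x‖ + η * (z - x) := by ring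
        linarith
      have a2 : |lamb z - lamb x| ≤ (z - x) * (|lamb' x| + η) := by
        have habs := abs_add_le ((z - x) * lamb' x) (lamb z - lamb x - (z - x) * lamb' x)
        rw [abs_mul, abs_of_pos hh0] at habs
        have h' : (z - x) * lamb' x + (lamb z - lamb x - (z - x) * lamb' x)
            = lamb z - lamb x := by ring
        rw [h'] at habs
        have e1 : (z - x) * (|lamb' x| + η) = (z - x) * |lamb' x| + η * (z - x) := by ring
        linarith
      have a3 : ‖w x - (u z - u x)‖ ≤ (1 - (z - x)) * g x + η * (z - x) := by
        have hd : w x - (u z - u x) = (1 - (z - x)) • w x - (u z - u x - (z - x) • w x) := by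
          rw [sub_smul, one_smul]; abel
        rw [hd]
        refine le_trans (norm_sub_le _ _) ?_
        rw [norm_smul, Real.norm_eq_abs, abs_of_nonneg (by linarith : (0:ℝ) ≤ 1 - (z - x)), hgx]
        linarith
      have hgz : g z ≤ (1 - lamb x + η) * ((z - x) * (g x + η))
          + ((z - x) * (|lamb' x| + η)) * (C + ‖u x‖)
          + ((1 - (z - x)) * g x + η * (z - x)) := by
        have t1 : g z ≤
            ‖lamb z • J (((1 - lamb z) / lamb z) • u z)
              - lamb z • J (((1 - lamb z) / lamb z) • u x)‖
            + ‖lamb z • J (((1 - lamb z) / lamb z) • u x)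
              - lamb x • J (((1 - lamb x) / lamb x) • u x)‖
            + ‖lamb x • J (((1 - lamb x) / lamb x) • u x) - u z‖ := by
          have hgz' : g z = ‖lamb z • J (((1 - lamb z) / lamb z) • u z) - u z‖ := rfl
          rw [hgz']
          have := dist_triangle4 (lamb z • J (((1 - lamb z) / lamb z) • u z))
            (lamb z • J (((1 - lamb z) / lamb z) • u x))
            (lamb x • J (((1 - lamb x) / lamb x) • u x)) (u z)
          simpa [dist_eq_norm] using this
        have b1 : ‖lamb z • J (((1 - lamb z) / lamb z) • u z)
            - lamb z • J (((1 - lamb z) / lamb z) • u x)‖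
            ≤ (1 - lamb x + η) * ((z - x) * (g x + η)) := by
          refine le_trans (hcontr (lamb z) hlz (u z) (u x)) ?_
          have hb : 1 - lamb z ≤ 1 - lamb x + η := by
            have := abs_lt.1 h3
            linarith [this.1]
          refine le_trans (mul_le_mul_of_nonneg_right hb (norm_nonneg _)) ?_
          exact mul_le_mul_of_nonneg_left a1 (by linarith [hlx.2, hη0'])
        have b2 : ‖lamb z • J (((1 - lamb z) / lamb z) • u x)
            - lamb x • J (((1 - lamb x) / lamb x) • u x)‖
            ≤ ((z - x) * (|lamb' x| + η)) * (C + ‖u x‖) := by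
          refine le_trans (hH (u x) (lamb z) hlz (lamb x) hlx) ?_
          exact mul_le_mul_of_nonneg_right a2 (by positivity)
        have b3 : ‖lamb x • J (((1 - lamb x) / lamb x) • u x) - u z‖
            ≤ (1 - (z - x)) * g x + η * (z - x) := by
          have hd : lamb x • J (((1 - lamb x) / lamb x) • u x) - u z = w x - (u z - u x) := by
            have hwx : w x = lamb x • J (((1 - lamb x) / lamb x) • u x) - u x := rfl
            rw [hwx]; abel
          rw [hd]; exact a3
        linarith
      have hFη : g z - g x ≤ (z - x) * F η := by
        have hFx : F η = (1 - lamb x + η) * (g x + η) + (|lamb' x| + η) * (C + ‖u x‖) + η - g x :=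
          rfl
        have hexp : (z - x) * ((1 - lamb x + η) * (g x + η)
              + (|lamb' x| + η) * (C + ‖u x‖) + η - g x)
            = (1 - lamb x + η) * ((z - x) * (g x + η))
            + ((z - x) * (|lamb' x| + η)) * (C + ‖u x‖)
            + ((1 - (z - x)) * g x + η * (z - x)) - g x := by ring
        rw [hFx, hexp]
        linarith
      rw [slope_def_field, div_lt_iff₀ hh0]
      calc g z - g x ≤ (z - x) * F η := hFη
        _ < (z - x) * r := mul_lt_mul_of_pos_left hηr hh0
        _ = r * (z - x) := by ring
    exact hev.frequently
  -- Gronwall comparison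
  have hgron : g T ≤ L T * (g 0 + (C + C') * I T) := by
    have hδ : ∀ δ > (0:ℝ), g T ≤ L T * (g 0 + (C + C') * I T) + δ * (L T * Real.exp T) := by
      intro δ hδ0
      set B : ℝ → ℝ := fun t => L t * (g 0 + (C + C') * I t) + δ * (L t * Real.exp t) with hBdef
      set B' : ℝ → ℝ := fun x => k x * B x + |lamb' x| * (C + C') + δ * (L x * Real.exp x)
        with hB'def
      have hBderiv : ∀ x ∈ Set.Ico (0:ℝ) T, HasDerivWithinAt B (B' x) (Set.Ici x) x := by
        intro x hx
        have h1 : HasDerivWithinAt (fun t => L t * (g 0 + (C + C') * I t))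
            ((L x * k x) * (g 0 + (C + C') * I x) + L x * ((C + C') * q x)) (Set.Ici x) x :=
          (hLderiv x hx.1).mul (((hIderiv x hx.1).const_mul (C + C')).const_add (g 0))
        have h2 : HasDerivWithinAt (fun t => δ * (L t * Real.exp t))
            (δ * ((L x * k x) * Real.exp x + L x * Real.exp x)) (Set.Ici x) x :=
          ((hLderiv x hx.1).mul (Real.hasDerivAt_exp x).hasDerivWithinAt).const_mul δ
        have h3 : HasDerivWithinAt B (L x * k x * (g 0 + (C + C') * I x) + L x * ((C + C') * q x) + δ * (L x * k x * Real.exp x + L x * Real.exp x)) (Set.Ici x) x := h1.add h2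
        convert h3 using 1
        rw [hB'def, hBdef, hqdef]
        have hLne : L x ≠ 0 := (hLpos x).ne'
        field_simp
        ring
      have hB0 : g 0 ≤ B 0 := by
        rw [hBdef]
        simp only [hL0, hI0, Real.exp_zero]
        nlinarith [hδ0]
      have hBcont : ContinuousOn B (Set.Icc 0 T) := by
        have hLc := hLcont.mono (Set.Icc_subset_Ici_self : Set.Icc (0:ℝ) T ⊆ Set.Ici 0)
        have hIc := hIcont.mono (Set.Icc_subset_Ici_self : Set.Icc (0:ℝ) T ⊆ Set.Ici 0)
        exact (hLc.mul (continuousOn_const.add (continuousOn_const.mul hIc))).add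
          (continuousOn_const.mul (hLc.mul (Real.continuous_exp.continuousOn)))
      have hbound : ∀ x ∈ Set.Ico (0:ℝ) T, g x = B x →
          k x * g x + |lamb' x| * (C + C') < B' x := by
        intro x _ he
        have hB'x : B' x = k x * B x + |lamb' x| * (C + C') + δ * (L x * Real.exp x) := rfl
        rw [hB'x, he]
        have h1 : 0 < δ * (L x * Real.exp x) :=
          mul_pos hδ0 (mul_pos (hLpos x) (Real.exp_pos x))
        linarith
      have hconc := image_le_of_liminf_slope_right_lt_deriv_boundary' hgcont hslope hB0
        hBcont hBderiv hbound (Set.right_mem_Icc.2 hT)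
      rw [hBdef] at hconc
      exact hconc
    by_contra hcon
    push_neg at hcon
    set A := L T * (g 0 + (C + C') * I T) with hA
    set M := L T * Real.exp T with hM
    have hM0 : 0 < M := mul_pos (hLpos T) (Real.exp_pos T)
    have h1 := hδ ((g T - A) / (2 * M)) (div_pos (by linarith) (by linarith))
    have h2 : (g T - A) / (2 * M) * M = (g T - A) / 2 := by
      field_simp
    linarith
  -- conclusion
  have hlT := hlamb T hT
  have hfin : lamb T * ‖u T - v (lamb T)‖ ≤ L T * (g 0 + (C + C') * I T) :=
    le_trans (hkey T hT) hgron
  have hg0 : g 0 = ‖lamb 0 • J (((1 - lamb 0) / lamb 0) • u 0) - u 0‖ := rfl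
  have hIT : I T = ∫ s in (0:ℝ)..T, |lamb' s| / L s := rfl
  rw [← hg0, ← hIT, div_mul_eq_mul_div, le_div_iff₀ hlT.1, mul_comm (‖u T - v (lamb T)‖)]
  exact hfin
end

section
/- Let X be a real Banach space, J : X → X nonexpansive, and Φ(λ,x) = λ J(((1−λ)/λ) x) for λ ∈ (0,1], with v_λ the unique fixed point of Φ(λ,·). Assume hypothesis (H): there is a constant C ≥ 0 with ‖Φ(λ,x) − Φ(μ,x)‖ ≤ |λ − μ|(C + ‖x‖) for all x ∈ X and λ, μ ∈ (0,1]. Let λ̄ : [0,∞) → (0,1] be continuously differentiable with λ̄'(t)/λ̄(t)² → 0 as t → ∞, and let u : [0,∞) → X be a differentiable solution of u'(t) = Φ(λ̄(t), u(t)) − u(t). Then ‖u(t) − v_{λ̄(t)}‖ → 0 as t → ∞. -/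
open Filter
open Set

lemma aux_contract {X : Type*} [NormedAddCommGroup X] [NormedSpace ℝ X]
    (J : X → X) (hJ : ∀ x y : X, ‖J x - J y‖ ≤ ‖x - y‖)
    {lam : ℝ} (hl : lam ∈ Set.Ioc (0:ℝ) 1) (x y : X) :
    ‖lam • J (((1 - lam) / lam) • x) - lam • J (((1 - lam) / lam) • y)‖
      ≤ (1 - lam) * ‖x - y‖ := by
  obtain ⟨hl0, hl1⟩ := hl
  have hc : (0:ℝ) ≤ (1 - lam) / lam := div_nonneg (by linarith) hl0.le
  have hcl : lam * ((1 - lam) / lam) = 1 - lam := by field_simp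
  calc ‖lam • J (((1 - lam) / lam) • x) - lam • J (((1 - lam) / lam) • y)‖
      = lam * ‖J (((1 - lam) / lam) • x) - J (((1 - lam) / lam) • y)‖ := by
        rw [← smul_sub, norm_smul, Real.norm_eq_abs, abs_of_pos hl0]
    _ ≤ lam * ‖((1 - lam) / lam) • x - ((1 - lam) / lam) • y‖ :=
        mul_le_mul_of_nonneg_left (hJ _ _) hl0.le
    _ = lam * (((1 - lam) / lam) * ‖x - y‖) := by
        rw [← smul_sub, norm_smul, Real.norm_eq_abs, abs_of_nonneg hc]
    _ = (1 - lam) * ‖x - y‖ := by rw [← mul_assoc, hcl]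

lemma aux_vbound {X : Type*} [NormedAddCommGroup X] [NormedSpace ℝ X]
    (J : X → X) (hJ : ∀ x y : X, ‖J x - J y‖ ≤ ‖x - y‖)
    (v : ℝ → X)
    (hv : ∀ lam ∈ Set.Ioc (0 : ℝ) 1, lam • J (((1 - lam) / lam) • v lam) = v lam)
    {lam : ℝ} (hl : lam ∈ Set.Ioc (0:ℝ) 1) : ‖v lam‖ ≤ ‖J 0‖ := by
  obtain ⟨hl0, hl1⟩ := hl
  have hc : (0:ℝ) ≤ (1 - lam) / lam := div_nonneg (by linarith) hl0.le
  have hcl : lam * ((1 - lam) / lam) = 1 - lam := by field_simp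
  have h1 : ‖v lam‖ ≤ lam * (((1 - lam) / lam) * ‖v lam‖ + ‖J 0‖) := by
    calc ‖v lam‖ = ‖lam • J (((1 - lam) / lam) • v lam)‖ := by
          conv_lhs => rw [← hv lam ⟨hl0, hl1⟩]
      _ = lam * ‖J (((1 - lam) / lam) • v lam)‖ := by
          rw [norm_smul, Real.norm_eq_abs, abs_of_pos hl0]
      _ ≤ lam * (‖J (((1 - lam) / lam) • v lam) - J 0‖ + ‖J 0‖) := by
          refine mul_le_mul_of_nonneg_left ?_ hl0.le
          calc ‖J (((1 - lam) / lam) • v lam)‖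
              = ‖(J (((1 - lam) / lam) • v lam) - J 0) + J 0‖ := by rw [sub_add_cancel]
            _ ≤ _ := norm_add_le _ _
      _ ≤ lam * (((1 - lam) / lam) * ‖v lam‖ + ‖J 0‖) := by
          refine mul_le_mul_of_nonneg_left (add_le_add ?_ le_rfl) hl0.le
          calc ‖J (((1 - lam) / lam) • v lam) - J 0‖ ≤ ‖((1 - lam) / lam) • v lam - 0‖ :=
                hJ _ _
            _ = ((1 - lam) / lam) * ‖v lam‖ := by
                rw [sub_zero, norm_smul, Real.norm_eq_abs, abs_of_nonneg hc]
  rw [mul_add, ← mul_assoc, hcl] at h1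
  have h2 : lam * ‖v lam‖ ≤ lam * ‖J 0‖ := by linarith
  exact le_of_mul_le_mul_left h2 hl0

lemma aux_vlip {X : Type*} [NormedAddCommGroup X] [NormedSpace ℝ X]
    (J : X → X) (hJ : ∀ x y : X, ‖J x - J y‖ ≤ ‖x - y‖)
    (v : ℝ → X)
    (hv : ∀ lam ∈ Set.Ioc (0 : ℝ) 1, lam • J (((1 - lam) / lam) • v lam) = v lam)
    (C : ℝ) (hC : 0 ≤ C)
    (hH : ∀ (x : X), ∀ lam ∈ Set.Ioc (0 : ℝ) 1, ∀ mu ∈ Set.Ioc (0 : ℝ) 1,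
      ‖lam • J (((1 - lam) / lam) • x) - mu • J (((1 - mu) / mu) • x)‖ ≤
        |lam - mu| * (C + ‖x‖))
    {lam mu : ℝ} (hl : lam ∈ Set.Ioc (0:ℝ) 1) (hm : mu ∈ Set.Ioc (0:ℝ) 1) :
    ‖v lam - v mu‖ ≤ |lam - mu| * (C + ‖J 0‖) / lam := by
  have h1 : ‖v lam - v mu‖ ≤ (1 - lam) * ‖v lam - v mu‖ + |lam - mu| * (C + ‖J 0‖) := by
    calc ‖v lam - v mu‖
        = ‖(lam • J (((1 - lam) / lam) • v lam) - lam • J (((1 - lam) / lam) • v mu))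
            + (lam • J (((1 - lam) / lam) • v mu) - mu • J (((1 - mu) / mu) • v mu))‖ := by
          rw [hv lam hl, hv mu hm, sub_add_sub_cancel]
      _ ≤ ‖lam • J (((1 - lam) / lam) • v lam) - lam • J (((1 - lam) / lam) • v mu)‖
            + ‖lam • J (((1 - lam) / lam) • v mu) - mu • J (((1 - mu) / mu) • v mu)‖ :=
          norm_add_le _ _
      _ ≤ (1 - lam) * ‖v lam - v mu‖ + |lam - mu| * (C + ‖J 0‖) := by
          refine add_le_add (aux_contract J hJ hl _ _) ?_
          calc ‖lam • J (((1 - lam) / lam) • v mu) - mu • J (((1 - mu) / mu) • v mu)‖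
              ≤ |lam - mu| * (C + ‖v mu‖) := hH (v mu) lam hl mu hm
            _ ≤ |lam - mu| * (C + ‖J 0‖) := by
                refine mul_le_mul_of_nonneg_left ?_ (abs_nonneg _)
                have := aux_vbound J hJ v hv hm
                linarith
  rw [le_div_iff₀ hl.1]
  nlinarith [norm_nonneg (v lam - v mu), hl.1]


/-- under hypothesis (H), if the C¹ parametrization
`λ̄ : [0,∞) → (0,1]` satisfies `λ̄'(t)/λ̄(t)² → 0` as `t → ∞`, then any solution `u`
of `u'(t) = Φ(λ̄(t),u(t)) - u(t)` satisfies `‖u(t) - v_{λ̄(t)}‖ → 0`, where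
`Φ(λ,x) = λ J(((1-λ)/λ)x)` and `v_λ` is its unique fixed point. -/
theorem slow_parametrization_tracks_vlambda
    {X : Type*} [NormedAddCommGroup X] [NormedSpace ℝ X] [CompleteSpace X]
    (J : X → X) (hJ : ∀ x y : X, ‖J x - J y‖ ≤ ‖x - y‖)
    (v : ℝ → X)
    (hv : ∀ lam ∈ Set.Ioc (0 : ℝ) 1,
      lam • J (((1 - lam) / lam) • v lam) = v lam)
    (C : ℝ) (hC : 0 ≤ C)
    (hH : ∀ (x : X), ∀ lam ∈ Set.Ioc (0 : ℝ) 1, ∀ mu ∈ Set.Ioc (0 : ℝ) 1,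
      ‖lam • J (((1 - lam) / lam) • x) - mu • J (((1 - mu) / mu) • x)‖ ≤
        |lam - mu| * (C + ‖x‖))
    (lamb lamb' : ℝ → ℝ)
    (hlamb : ∀ t ≥ (0 : ℝ), lamb t ∈ Set.Ioc (0 : ℝ) 1)
    (hlambd : ∀ t ≥ (0 : ℝ), HasDerivAt lamb (lamb' t) t)
    (hlambd' : ContinuousOn lamb' (Set.Ici (0 : ℝ)))
    (hslow : Tendsto (fun t : ℝ => lamb' t / (lamb t) ^ 2) atTop (nhds 0))
    (u : ℝ → X)
    (hu : ∀ t ≥ (0 : ℝ),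
      HasDerivAt u (lamb t • J (((1 - lamb t) / lamb t) • u t) - u t) t) :
    Tendsto (fun t : ℝ => ‖u t - v (lamb t)‖) atTop (nhds 0) := by
  set M : ℝ := ‖J 0‖ with hM
  have hM0 : 0 ≤ M := norm_nonneg _
  -- continuity of t ↦ v (lamb t) on [0, ∞)
  have hvlcont : ContinuousOn (fun z => v (lamb z)) (Set.Ici (0:ℝ)) := by
    intro t ht
    have hlt := hlamb t ht
    rw [ContinuousWithinAt, tendsto_iff_norm_sub_tendsto_zero]
    have hbound : ∀ᶠ z in nhdsWithin t (Set.Ici 0),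
        ‖v (lamb z) - v (lamb t)‖ ≤ (C + M) / lamb t * |lamb z - lamb t| := by
      filter_upwards [self_mem_nhdsWithin] with z hz
      have h1 := aux_vlip J hJ v hv C hC hH hlt (hlamb z hz)
      rw [norm_sub_rev] at h1
      calc ‖v (lamb z) - v (lamb t)‖ ≤ |lamb t - lamb z| * (C + M) / lamb t := h1
        _ = (C + M) / lamb t * |lamb z - lamb t| := by rw [abs_sub_comm]; ring
    have hlc : Tendsto lamb (nhdsWithin t (Set.Ici 0)) (nhds (lamb t)) :=
      ((hlambd t ht).continuousAt).continuousWithinAt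
    have hlim : Tendsto (fun z => (C + M) / lamb t * |lamb z - lamb t|)
        (nhdsWithin t (Set.Ici 0)) (nhds 0) := by
      have := ((hlc.sub_const (lamb t)).abs).const_mul ((C + M) / lamb t)
      simpa using this
    exact squeeze_zero' (Eventually.of_forall fun z => norm_nonneg _) hbound hlim
  -- main quantitative step
  have key : ∀ e > (0:ℝ), ∀ᶠ t in atTop, ‖u t - v (lamb t)‖ < e := by
    intro e he
    set ε : ℝ := e / (2*(C+M) + 2) with hε
    have hεpos : 0 < ε := div_pos he (by linarith)
    set K : ℝ := ε * (C + M) with hK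
    have hK0 : 0 ≤ K := mul_nonneg hεpos.le (by linarith)
    have hKe : K < e := by
      rw [hK, hε, div_mul_eq_mul_div, div_lt_iff₀ (by linarith : (0:ℝ) < 2*(C+M)+2)]
      nlinarith
    obtain ⟨T₀, hT₀⟩ := Metric.tendsto_atTop.1 hslow ε hεpos
    set T : ℝ := max T₀ 0 with hT
    have hT0 : (0:ℝ) ≤ T := le_max_right _ _
    have hld : ∀ t ≥ T, |lamb' t| ≤ ε * (lamb t)^2 := by
      intro t htT
      have ht0 : (0:ℝ) ≤ t := le_trans hT0 htT
      have h1 := hT₀ t (le_trans (le_max_left _ _) htT)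
      rw [Real.dist_eq, sub_zero, abs_div] at h1
      have hp : (0:ℝ) < (lamb t)^2 := pow_pos (hlamb t ht0).1 2
      rw [abs_of_pos hp, div_lt_iff₀ hp] at h1
      linarith
    set A : ℝ := (lamb T)⁻¹ + 1 with hA
    have hlT := hlamb T hT0
    have hA1 : (1:ℝ) ≤ A := by
      have : 0 < (lamb T)⁻¹ := inv_pos.2 hlT.1
      rw [hA]; linarith
    -- 1/λ grows at most linearly with slope ε
    have hψ : ∀ t ≥ T, (lamb t)⁻¹ ≤ (lamb T)⁻¹ + ε * (t - T) := by
      intro t htT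
      have hder : ∀ s ∈ Set.Icc T t,
          HasDerivWithinAt (fun s => (lamb s)⁻¹) (-lamb' s / (lamb s)^2) (Set.Icc T t) s := by
        intro s hs
        have hs0 : (0:ℝ) ≤ s := le_trans hT0 hs.1
        exact ((hlambd s hs0).inv (hlamb s hs0).1.ne').hasDerivWithinAt
      have hbd : ∀ s ∈ Set.Icc T t, ‖-lamb' s / (lamb s)^2‖ ≤ ε := by
        intro s hs
        have hs0 : (0:ℝ) ≤ s := le_trans hT0 hs.1
        have hp : (0:ℝ) < (lamb s)^2 := pow_pos (hlamb s hs0).1 2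
        rw [Real.norm_eq_abs, abs_div, abs_neg, abs_of_pos hp, div_le_iff₀ hp]
        calc |lamb' s| ≤ ε * (lamb s)^2 := hld s hs.1
          _ = ε * (lamb s)^2 := rfl
      have := Convex.norm_image_sub_le_of_norm_hasDerivWithin_le hder hbd
        (convex_Icc T t) (Set.left_mem_Icc.2 htT) (Set.right_mem_Icc.2 htT)
      rw [Real.norm_eq_abs, Real.norm_eq_abs] at this
      have h2 : (lamb t)⁻¹ - (lamb T)⁻¹ ≤ ε * |t - T| := le_trans (le_abs_self _) this
      rw [abs_of_nonneg (by linarith : (0:ℝ) ≤ t - T)] at h2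
      linarith
    set g : ℝ → ℝ := fun t => A + 2*ε*(t - T) with hg
    have hgpos : ∀ t ≥ T, 0 < g t := by
      intro t htT
      have : 0 ≤ ε * (t - T) := mul_nonneg hεpos.le (by linarith)
      simp only [hg]; nlinarith
    have hglb : ∀ t ≥ T, (g t)⁻¹ < lamb t := by
      intro t htT
      have h9 := hψ t htT
      have hlt0 : 0 < lamb t := (hlamb t (le_trans hT0 htT)).1
      have hAg : (lamb t)⁻¹ < g t := by
        have h10 : 0 ≤ ε * (t - T) := mul_nonneg hεpos.le (by linarith)
        simp only [hg, hA]; nlinarith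
      have := inv_strictAnti₀ (inv_pos.2 hlt0) hAg
      rwa [inv_inv] at this
    set r : ℝ := -(1/(2*ε)) with hr
    set φ : ℝ → ℝ := fun t => ‖u t - v (lamb t)‖ with hφ
    set D : ℝ := max (φ T - K) 0 * A ^ (-r) + 1 with hD
    have hD0 : 0 < D := by
      have h1 : 0 ≤ max (φ T - K) 0 := le_max_right _ _
      have h2 : 0 ≤ A ^ (-r) := Real.rpow_nonneg (by linarith) _
      rw [hD]; nlinarith
    set B : ℝ → ℝ := fun t => K + D * g t ^ r with hB
    set B' : ℝ → ℝ := fun t => D * (r * g t ^ (r-1) * (2*ε)) with hB'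
    have hgd : ∀ t : ℝ, HasDerivAt g (2*ε) t := by
      intro t
      have := (((hasDerivAt_id t).sub_const T).const_mul (2*ε))
      simpa [hg] using this.const_add A
    have hBd : ∀ t ≥ T, HasDerivAt B (B' t) t := by
      intro t htT
      have hgt := hgpos t htT
      have h1 : HasDerivAt (fun s : ℝ => g s ^ r) (r * g t ^ (r-1) * (2*ε)) t := by
        have h2 := (Real.hasDerivAt_rpow_const (x := g t) (p := r) (Or.inl hgt.ne')).comp
          t (hgd t)
        exact h2
      simpa [hB, hB'] using (h1.const_mul D).const_add K
    -- comparison on [T, b] for every b ≥ T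
    have hcomp : ∀ b ≥ T, φ b ≤ B b := by
      intro b hb
      have hIcc : Set.Icc T b ⊆ Set.Ici (0:ℝ) := fun z hz => le_trans hT0 hz.1
      have hcont : ContinuousOn φ (Set.Icc T b) := by
        refine ContinuousOn.norm (ContinuousOn.sub ?_ (hvlcont.mono hIcc))
        exact fun z hz => ((hu z (hIcc hz)).continuousAt).continuousWithinAt
      have hslope : ∀ x ∈ Set.Ico T b, ∀ ρ, lamb x * (K - φ x) < ρ →
          ∃ᶠ z in nhdsWithin x (Set.Ioi x), slope φ x z < ρ := by
        intro x hx ρ hρ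
        have hx0 : (0:ℝ) ≤ x := le_trans hT0 hx.1
        obtain ⟨hlx0, hlx1⟩ := hlamb x hx0
        set d : X := lamb x • J (((1 - lamb x) / lamb x) • u x) - u x with hd
        set a : ℝ → ℝ := fun z =>
          ‖slope u x z - d‖ + (C + M) / lamb x * |slope lamb x z| - lamb x * φ x with ha
        have hmono : nhdsWithin x (Set.Ioi x) ≤ nhdsWithin x ({x}ᶜ) :=
          nhdsWithin_mono x (fun z hz => Set.mem_compl_singleton_iff.2 (ne_of_gt hz))
        have h1 : Tendsto (fun z => slope u x z) (nhdsWithin x (Set.Ioi x)) (nhds d) :=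
          (hasDerivAt_iff_tendsto_slope.1 (hu x hx0)).mono_left hmono
        have h2 : Tendsto (fun z => slope lamb x z) (nhdsWithin x (Set.Ioi x))
            (nhds (lamb' x)) :=
          (hasDerivAt_iff_tendsto_slope.1 (hlambd x hx0)).mono_left hmono
        have hL : Tendsto a (nhdsWithin x (Set.Ioi x))
            (nhds (‖d - d‖ + (C + M) / lamb x * |lamb' x| - lamb x * φ x)) :=
          (((h1.sub_const d).norm.add ((h2.abs).const_mul ((C + M) / lamb x))).sub_const
            (lamb x * φ x))
        have hLle : ‖d - d‖ + (C + M) / lamb x * |lamb' x| - lamb x * φ x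
            ≤ lamb x * (K - φ x) := by
          rw [sub_self, norm_zero]
          have h3 := hld x hx.1
          have h4 : (C + M) / lamb x * |lamb' x| ≤ (C + M) / lamb x * (ε * (lamb x)^2) :=
            mul_le_mul_of_nonneg_left h3 (div_nonneg (by linarith) hlx0.le)
          have h5 : (C + M) / lamb x * (ε * (lamb x)^2) = lamb x * K := by
            rw [hK]; field_simp
          rw [mul_sub]; linarith
        have hev1 : ∀ᶠ z in nhdsWithin x (Set.Ioi x), a z < ρ :=
          hL.eventually_lt_const (lt_of_le_of_lt hLle hρ)
        have hev2 : ∀ᶠ z in nhdsWithin x (Set.Ioi x), z ∈ Set.Ioo x (x+1) :=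
          Ioo_mem_nhdsGT_of_mem ⟨le_refl x, lt_add_one x⟩
        refine ((hev1.and hev2).mono ?_).frequently
        rintro z ⟨hza, hz⟩
        refine lt_of_le_of_lt ?_ hza
        -- slope bound
        have hz0 : (0:ℝ) ≤ z := le_trans hx0 hz.1.le
        have hzx : 0 < z - x := sub_pos.2 hz.1
        have hh1 : z - x ≤ 1 := by have := hz.2; linarith
        obtain ⟨hlz0, hlz1⟩ := hlamb z hz0
        have hmid : ‖u x + (z - x) • d - v (lamb x)‖ ≤ (1 - (z-x) * lamb x) * φ x := by
          have hcontr2 : ‖lamb x • J (((1 - lamb x) / lamb x) • u x) - v (lamb x)‖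
              ≤ (1 - lamb x) * φ x := by
            conv_lhs => rw [← hv (lamb x) ⟨hlx0, hlx1⟩]
            exact aux_contract J hJ ⟨hlx0, hlx1⟩ (u x) (v (lamb x))
          have heq : u x + (z - x) • d - v (lamb x)
              = (1 - (z-x)) • (u x - v (lamb x))
                + (z - x) • (lamb x • J (((1 - lamb x) / lamb x) • u x) - v (lamb x)) := by
            rw [hd]; module
          rw [heq]
          calc ‖(1 - (z-x)) • (u x - v (lamb x))
                + (z - x) • (lamb x • J (((1 - lamb x) / lamb x) • u x) - v (lamb x))‖
              ≤ ‖(1 - (z-x)) • (u x - v (lamb x))‖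
                + ‖(z - x) • (lamb x • J (((1 - lamb x) / lamb x) • u x) - v (lamb x))‖ :=
                norm_add_le _ _
            _ ≤ (1 - (z-x)) * φ x + (z - x) * ((1 - lamb x) * φ x) := by
                refine add_le_add ?_ ?_
                · rw [norm_smul, Real.norm_eq_abs, abs_of_nonneg (by linarith)]
                · rw [norm_smul, Real.norm_eq_abs, abs_of_nonneg hzx.le]
                  exact mul_le_mul_of_nonneg_left hcontr2 hzx.le
            _ = (1 - (z-x) * lamb x) * φ x := by ring
        have hN3 : ‖v (lamb x) - v (lamb z)‖ ≤ (C + M) / lamb x * |lamb z - lamb x| := by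
          calc ‖v (lamb x) - v (lamb z)‖
              ≤ |lamb x - lamb z| * (C + M) / lamb x :=
                aux_vlip J hJ v hv C hC hH ⟨hlx0, hlx1⟩ ⟨hlz0, hlz1⟩
            _ = (C + M) / lamb x * |lamb z - lamb x| := by rw [abs_sub_comm]; ring
        have hN1 : ‖u z - u x - (z - x) • d‖ = ‖slope u x z - d‖ * (z - x) := by
          have : u z - u x - (z - x) • d = (z - x) • (slope u x z - d) := by
            rw [slope_def_module]
            match_scalars <;> field_simp
          rw [this, norm_smul, Real.norm_eq_abs, abs_of_pos hzx, mul_comm]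
        have hφz : φ z ≤ ‖u z - u x - (z - x) • d‖ + ‖u x + (z - x) • d - v (lamb x)‖
            + ‖v (lamb x) - v (lamb z)‖ := by
          have : u z - v (lamb z) = (u z - u x - (z - x) • d)
              + (u x + (z - x) • d - v (lamb x)) + (v (lamb x) - v (lamb z)) := by abel
          rw [hφ]; dsimp only; rw [this]
          exact norm_add₃_le
        have e5 : |slope lamb x z| * (z - x) = |lamb z - lamb x| := by
          rw [slope_def_field, abs_div, abs_of_pos hzx, div_mul_cancel₀ _ hzx.ne']
        have e6 : (C + M) / lamb x * |slope lamb x z| * (z - x)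
            = (C + M) / lamb x * |lamb z - lamb x| := by rw [mul_assoc, e5]
        have hslope_eq : slope φ x z = (φ z - φ x) / (z - x) := slope_def_field φ x z
        rw [hslope_eq, div_le_iff₀ hzx]
        calc φ z - φ x ≤ (‖u z - u x - (z - x) • d‖ + (1 - (z-x) * lamb x) * φ x
              + (C + M) / lamb x * |lamb z - lamb x|) - φ x := by
              have := hφz
              linarith [hmid, hN3]
          _ = ‖slope u x z - d‖ * (z - x)
              + (C + M) / lamb x * |slope lamb x z| * (z - x)
              - lamb x * φ x * (z - x) := by rw [hN1, e6]; ring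
          _ = a z * (z - x) := by rw [ha]; ring
      have hinit : φ T ≤ B T := by
        have hgT : g T = A := by simp [hg]
        have hApos : (0:ℝ) < A := by linarith
        have h1 : A ^ (-r) * A ^ r = 1 := by
          rw [← Real.rpow_add hApos, neg_add_cancel, Real.rpow_zero]
        have h2 : B T = K + (max (φ T - K) 0 * (A ^ (-r) * A ^ r) + A ^ r) := by
          rw [hB]; dsimp only; rw [hgT, hD]; ring
        rw [h2, h1, mul_one]
        have h3 : φ T - K ≤ max (φ T - K) 0 := le_max_left _ _
        have h4 : 0 < A ^ r := Real.rpow_pos_of_pos hApos r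
        linarith
      have hbound : ∀ x ∈ Set.Ico T b, φ x = B x → lamb x * (K - φ x) < B' x := by
        intro x hx heq
        have hgx := hgpos x hx.1
        have hP : 0 < D * g x ^ r := mul_pos hD0 (Real.rpow_pos_of_pos hgx r)
        have h5 : (g x)⁻¹ < lamb x := hglb x hx.1
        have e7 : g x ^ (r - 1) = g x ^ r * (g x)⁻¹ := by
          rw [Real.rpow_sub hgx, Real.rpow_one, div_eq_mul_inv]
        have hKB : K - φ x = -(D * g x ^ r) := by
          rw [heq, hB]; ring
        have hr2 : r * (2*ε) = -1 := by rw [hr]; field_simp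
        have hB'eq : B' x = -(D * g x ^ r * (g x)⁻¹) := by
          rw [hB']; dsimp only; rw [e7]
          calc D * (r * (g x ^ r * (g x)⁻¹) * (2*ε))
              = (r * (2*ε)) * (D * (g x ^ r * (g x)⁻¹)) := by ring
            _ = -(D * g x ^ r * (g x)⁻¹) := by rw [hr2]; ring
        rw [hKB, hB'eq]
        have h6 : D * g x ^ r * (g x)⁻¹ < D * g x ^ r * lamb x :=
          (mul_lt_mul_iff_right₀ hP).2 h5
        nlinarith
      have := image_le_of_liminf_slope_right_lt_deriv_boundary'
        (f := φ) (f' := fun x => lamb x * (K - φ x)) (a := T) (b := b)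
        hcont hslope hinit
        (fun x hx => ((hBd x hx.1).continuousAt).continuousWithinAt)
        (fun x hx => (hBd x hx.1).hasDerivWithinAt)
        hbound
      exact this ⟨hb, le_refl b⟩
    -- B tends to K at infinity
    have hgtop : Tendsto g atTop atTop := by
      have h1 : Tendsto (fun t : ℝ => t - T) atTop atTop :=
        tendsto_atTop_add_const_right atTop (-T) tendsto_id
      have h2 : Tendsto (fun t : ℝ => 2*ε*(t - T)) atTop atTop :=
        h1.const_mul_atTop (by linarith)
      simpa [hg] using tendsto_atTop_add_const_left atTop A h2
    have hBtend : Tendsto B atTop (nhds K) := by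
      have h1 : Tendsto (fun s : ℝ => s ^ r) atTop (nhds 0) := by
        rw [hr]; exact tendsto_rpow_neg_atTop (by positivity)
      have h2 : Tendsto (fun t => g t ^ r) atTop (nhds 0) := h1.comp hgtop
      have h3 := (h2.const_mul D).const_add K
      simpa [hB] using h3
    have hBev : ∀ᶠ t in atTop, B t < e := hBtend.eventually_lt_const hKe
    filter_upwards [eventually_ge_atTop T, hBev] with t h1 h2
    exact lt_of_le_of_lt (hcomp t h1) h2
  rw [tendsto_order]
  constructor
  · intro a ha
    exact Eventually.of_forall fun t => lt_of_lt_of_le ha (norm_nonneg _)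
  · intro a ha
    exact key a ha
end

section
/- Let X be a real Banach space, J : X → X nonexpansive, and Φ(λ,x) = λ J(((1−λ)/λ) x) for λ ∈ (0,1]. Assume hypothesis (H): there is a constant C ≥ 0 with ‖Φ(λ,x) − Φ(μ,x)‖ ≤ |λ − μ|(C + ‖x‖) for all x ∈ X and λ, μ ∈ (0,1]. Let λ̄, μ̄ : [0,∞) → (0,1] be continuous, and let u, v : [0,∞) → X be differentiable with u'(t) = Φ(λ̄(t), u(t)) − u(t) and v'(t) = Φ(μ̄(t), v(t)) − v(t) for all t ≥ 0. Then for every t ≥ 0, ‖u(t) − v(t)‖ ≤ e^{−∫_0^t μ̄(s) ds} ( ‖u(0) − v(0)‖ + ∫_0^t (C + ‖u(s)‖) |λ̄(s) − μ̄(s)| e^{∫_0^s μ̄(i) di} ds ). -/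
open Set Filter
open scoped Topology

/-- Refined right-slope estimate for the norm: if `w' = g - w x` at `x` (from the right),
then the right liminf of the slope of `‖w‖` is at most `‖g‖ - ‖w x‖`. -/
lemma liminf_slope_aux {E : Type*} [NormedAddCommGroup E] [NormedSpace ℝ E]
    {f : ℝ → E} {g : E} {x r : ℝ}
    (hf : HasDerivWithinAt f (g - f x) (Set.Ici x) x) (hr : ‖g‖ - ‖f x‖ < r) :
    ∃ᶠ z in 𝓝[>] x, slope (norm ∘ f) x z < r := by
  have ht : Tendsto (slope f x) (𝓝[>] x) (𝓝 (g - f x)) :=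
    (hasDerivWithinAt_iff_tendsto_slope' (lt_irrefl x : x ∉ Set.Ioi x)).1 hf.Ioi_of_Ici
  set ε : ℝ := r - (‖g‖ - ‖f x‖) with hεdef
  have hε0 : 0 < ε := by simp only [hεdef]; linarith
  have h1 : ∀ᶠ z in 𝓝[>] x, dist (slope f x z) (g - f x) < ε :=
    Metric.tendsto_nhds.1 ht ε hε0
  have h2 : ∀ᶠ z in 𝓝[>] x, z ∈ Set.Ioc x (x + 1) :=
    Ioc_mem_nhdsGT_of_mem ⟨le_rfl, lt_add_one x⟩
  refine ((h1.and h2).mono ?_).frequently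
  rintro z ⟨hd, hz1, hz2⟩
  have hzx : 0 < z - x := sub_pos.2 hz1
  have hzx1 : z - x ≤ 1 := by linarith
  have hfz : f z - f x = (z - x) • slope f x z := by
    rw [slope, vsub_eq_sub, smul_inv_smul₀ (ne_of_gt hzx)]
  have e1 : f z = ((1 - (z - x)) • f x + (z - x) • g) +
      (z - x) • (slope f x z - (g - f x)) := by
    have : f z = f x + (z - x) • slope f x z := by rw [← hfz]; abel
    rw [this]; module
  have hnd : ‖slope f x z - (g - f x)‖ < ε := by rwa [dist_eq_norm] at hd
  have hb1 : ‖(1 - (z - x)) • f x + (z - x) • g‖ ≤ (1 - (z - x)) * ‖f x‖ + (z - x) * ‖g‖ := by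
    refine (norm_add_le _ _).trans ?_
    rw [norm_smul, norm_smul, Real.norm_eq_abs, Real.norm_eq_abs,
      abs_of_nonneg (by linarith), abs_of_nonneg hzx.le]
  have hb2 : ‖(z - x) • (slope f x z - (g - f x))‖ < (z - x) * ε := by
    rw [norm_smul, Real.norm_eq_abs, abs_of_nonneg hzx.le]
    exact mul_lt_mul_of_pos_left hnd hzx
  have key : ‖f z‖ - ‖f x‖ < r * (z - x) := by
    have h3 : ‖f z‖ ≤ ‖(1 - (z - x)) • f x + (z - x) • g‖ +
        ‖(z - x) • (slope f x z - (g - f x))‖ := by rw [e1]; exact norm_add_le _ _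
    have hring : (1 - (z - x)) * ‖f x‖ + (z - x) * ‖g‖ + (z - x) * ε - ‖f x‖
        = r * (z - x) := by simp only [hεdef]; ring
    linarith
  show slope (norm ∘ f) x z < r
  rw [slope_def_field]
  show (‖f z‖ - ‖f x‖) / (z - x) < r
  rw [div_lt_iff₀ hzx]
  exact key

/-- FTC: right derivative of the primitive within `Ici x`, for `f` continuous on `[0, T]`. -/
lemma primitive_hasDerivWithinAt_aux {f : ℝ → ℝ} {T x : ℝ}
    (hf : ContinuousOn f (Set.Icc 0 T)) (hx : x ∈ Set.Ico 0 T) :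
    HasDerivWithinAt (fun t => ∫ s in (0:ℝ)..t, f s) (f x) (Set.Ici x) x := by
  have hsub : Set.Ioo x T ⊆ Set.Icc 0 T := fun y hy => ⟨hx.1.trans hy.1.le, hy.2.le⟩
  refine intervalIntegral.integral_hasDerivWithinAt_right ?_ ?_ ?_
  · apply ContinuousOn.intervalIntegrable
    rw [Set.uIcc_of_le hx.1]
    exact hf.mono (Set.Icc_subset_Icc le_rfl hx.2.le)
  · exact ⟨Set.Ioo x T, Ioo_mem_nhdsGT_of_mem ⟨le_rfl, hx.2⟩,
      (hf.mono hsub).aestronglyMeasurable measurableSet_Ioo⟩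
  · refine ContinuousWithinAt.mono_of_mem_nhdsWithin (hf x ⟨hx.1, hx.2.le⟩) ?_
    exact mem_of_superset (Ioc_mem_nhdsGT_of_mem ⟨le_rfl, hx.2⟩)
      (fun y hy => ⟨hx.1.trans hy.1.le, hy.2⟩)



open intervalIntegral

/-- under hypothesis (H), for continuous parametrizations
`λ̄, μ̄ : [0,∞) → (0,1]` and solutions `u, v` of the corresponding evolution
equations `u' = Φ(λ̄(t),u) - u`, `v' = Φ(μ̄(t),v) - v`, where
`Φ(λ,x) = λ J(((1-λ)/λ)x)`, one has
`‖u(t) - v(t)‖ ≤ e^{-∫_0^t μ̄} (‖u(0) - v(0)‖ + ∫_0^t (C + ‖u(s)‖)|λ̄(s) - μ̄(s)| e^{∫_0^s μ̄} ds)`. -/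
theorem two_parametrizations_comparison
    {X : Type*} [NormedAddCommGroup X] [NormedSpace ℝ X] [CompleteSpace X]
    (J : X → X) (hJ : ∀ x y : X, ‖J x - J y‖ ≤ ‖x - y‖)
    (C : ℝ) (hC : 0 ≤ C)
    (hH : ∀ (x : X), ∀ lam ∈ Set.Ioc (0 : ℝ) 1, ∀ mu ∈ Set.Ioc (0 : ℝ) 1,
      ‖lam • J (((1 - lam) / lam) • x) - mu • J (((1 - mu) / mu) • x)‖ ≤
        |lam - mu| * (C + ‖x‖))
    (lamb mub : ℝ → ℝ)
    (hlamb : ∀ t ≥ (0 : ℝ), lamb t ∈ Set.Ioc (0 : ℝ) 1)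
    (hmub : ∀ t ≥ (0 : ℝ), mub t ∈ Set.Ioc (0 : ℝ) 1)
    (hlambc : ContinuousOn lamb (Set.Ici (0 : ℝ)))
    (hmubc : ContinuousOn mub (Set.Ici (0 : ℝ)))
    (u v : ℝ → X)
    (hu : ∀ t ≥ (0 : ℝ),
      HasDerivAt u (lamb t • J (((1 - lamb t) / lamb t) • u t) - u t) t)
    (hv : ∀ t ≥ (0 : ℝ),
      HasDerivAt v (mub t • J (((1 - mub t) / mub t) • v t) - v t) t) :
    ∀ t ≥ (0 : ℝ),
      ‖u t - v t‖ ≤ Real.exp (-∫ s in (0 : ℝ)..t, mub s) *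
        (‖u 0 - v 0‖ + ∫ s in (0 : ℝ)..t,
          (C + ‖u s‖) * |lamb s - mub s| * Real.exp (∫ i in (0 : ℝ)..s, mub i)) := by
  intro T hT
  -- notation
  set M : ℝ → ℝ := fun t => ∫ s in (0:ℝ)..t, mub s with hMdef
  set h : ℝ → ℝ := fun s => (C + ‖u s‖) * |lamb s - mub s| with hhdef
  -- continuity facts
  have hucont : ContinuousOn u (Set.Ici 0) :=
    fun t ht => ((hu t ht).continuousAt).continuousWithinAt
  have hvcont : ContinuousOn v (Set.Ici 0) :=
    fun t ht => ((hv t ht).continuousAt).continuousWithinAt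
  have hhcont : ContinuousOn h (Set.Ici 0) :=
    ((continuousOn_const.add hucont.norm).mul (hlambc.sub hmubc).abs)
  have hmubT : ContinuousOn mub (Set.Icc 0 T) := hmubc.mono Set.Icc_subset_Ici_self
  have hMcont : ContinuousOn M (Set.Icc 0 T) := by
    have := intervalIntegral.continuousOn_primitive_interval
      (μ := MeasureTheory.volume) (f := mub) (a := 0) (b := T) ?_
    · rwa [Set.uIcc_of_le hT] at this
    · rw [Set.uIcc_of_le hT]; exact hmubT.integrableOn_Icc
  have hEcont : ContinuousOn (fun s => Real.exp (M s)) (Set.Icc 0 T) :=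
    Real.continuous_exp.comp_continuousOn hMcont
  have hTm : T ∈ Set.Icc (0:ℝ) T := Set.right_mem_Icc.2 hT
  -- key estimate for every positive ε
  have key : ∀ ε : ℝ, 0 < ε → ‖u T - v T‖ ≤
      Real.exp (-M T) * (‖u 0 - v 0‖ + ε + ∫ s in (0:ℝ)..T, (h s + ε) * Real.exp (M s)) := by
    intro ε hε
    set gε : ℝ → ℝ := fun s => (h s + ε) * Real.exp (M s) with hgεdef
    have hgεcont : ContinuousOn gε (Set.Icc 0 T) :=
      ((hhcont.mono Set.Icc_subset_Ici_self).add continuousOn_const).mul hEcont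
    set B : ℝ → ℝ := fun t => Real.exp (-M t) * (‖u 0 - v 0‖ + ε + ∫ s in (0:ℝ)..t, gε s)
      with hBdef
    set f' : ℝ → ℝ := fun x => ‖(lamb x • J (((1 - lamb x) / lamb x) • u x)) -
      (mub x • J (((1 - mub x) / mub x) • v x))‖ - ‖u x - v x‖ with hf'def
    have main := image_norm_le_of_liminf_right_slope_norm_lt_deriv_boundary
      (f := fun t => u t - v t) (f' := f') (a := 0) (b := T)
      (B := B) (B' := fun x => -mub x * B x + (h x + ε)) ?_ ?_ ?_ ?_ ?_ ?_
    · exact main hTm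
    · -- continuity of u - v
      exact fun t ht => (((hu t ht.1).sub (hv t ht.1)).continuousAt).continuousWithinAt
    · -- liminf slope estimate
      intro x hx r hr
      have hx0 : (0:ℝ) ≤ x := hx.1
      have hder : HasDerivWithinAt (fun t => u t - v t)
          ((lamb x • J (((1 - lamb x) / lamb x) • u x) -
            mub x • J (((1 - mub x) / mub x) • v x)) - (u x - v x)) (Set.Ici x) x := by
        have := ((hu x hx0).sub (hv x hx0)).hasDerivWithinAt (s := Set.Ici x)
        rwa [sub_sub_sub_comm] at this
      exact liminf_slope_aux hder hr
    · -- initial bound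
      have : M 0 = 0 := intervalIntegral.integral_same
      simp only [hBdef, this, intervalIntegral.integral_same, neg_zero, Real.exp_zero, one_mul,
        add_zero]
      linarith
    · -- continuity of B
      have hGc : ContinuousOn (fun t => ∫ s in (0:ℝ)..t, gε s) (Set.Icc 0 T) := by
        have := intervalIntegral.continuousOn_primitive_interval
          (μ := MeasureTheory.volume) (f := gε) (a := 0) (b := T) ?_
        · rwa [Set.uIcc_of_le hT] at this
        · rw [Set.uIcc_of_le hT]; exact hgεcont.integrableOn_Icc
      exact (Real.continuous_exp.comp_continuousOn hMcont.neg).mul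
        ((continuousOn_const.add hGc))
    · -- derivative of B
      intro x hx
      have hM' : HasDerivWithinAt M (mub x) (Set.Ici x) x :=
        primitive_hasDerivWithinAt_aux hmubT hx
      have hG' : HasDerivWithinAt (fun t => ∫ s in (0:ℝ)..t, gε s) (gε x) (Set.Ici x) x :=
        primitive_hasDerivWithinAt_aux hgεcont hx
      have hE' : HasDerivWithinAt (fun t => Real.exp (-M t))
          (Real.exp (-M x) * (-mub x)) (Set.Ici x) x := hM'.neg.exp
      have hprod := hE'.mul ((hG'.const_add (‖u 0 - v 0‖ + ε)))
      have hexp1 : Real.exp (-M x) * Real.exp (M x) = 1 := by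
        rw [← Real.exp_add]; simp
      refine HasDerivWithinAt.congr_deriv hprod ?_
      have hgx : gε x = (h x + ε) * Real.exp (M x) := rfl
      simp only [hBdef]
      rw [hgx]
      linear_combination (h x + ε) * hexp1
    · -- the strict differential inequality at contact points
      intro x hx hfB
      have hx0 : (0:ℝ) ≤ x := hx.1
      have hμ := hmub x hx0
      have hlam := hlamb x hx0
      have tri : ‖(lamb x • J (((1 - lamb x) / lamb x) • u x)) -
          (mub x • J (((1 - mub x) / mub x) • v x))‖ ≤
          h x + (1 - mub x) * ‖u x - v x‖ := by
        have t1 := hH (u x) (lamb x) hlam (mub x) hμ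
        have t2 : ‖(mub x • J (((1 - mub x) / mub x) • u x)) -
            (mub x • J (((1 - mub x) / mub x) • v x))‖ ≤ (1 - mub x) * ‖u x - v x‖ := by
          rw [← smul_sub, norm_smul, Real.norm_eq_abs, abs_of_pos hμ.1]
          have hJ' := hJ (((1 - mub x) / mub x) • u x) (((1 - mub x) / mub x) • v x)
          rw [← smul_sub, norm_smul, Real.norm_eq_abs,
            abs_of_nonneg (div_nonneg (by linarith [hμ.2]) hμ.1.le)] at hJ'
          calc mub x * ‖J (((1 - mub x) / mub x) • u x) - J (((1 - mub x) / mub x) • v x)‖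
              ≤ mub x * ((1 - mub x) / mub x * ‖u x - v x‖) := by
                exact mul_le_mul_of_nonneg_left hJ' hμ.1.le
            _ = (1 - mub x) * ‖u x - v x‖ := by
                field_simp
                rw [mul_assoc]; exact mul_div_cancel_left₀ _ (ne_of_gt hμ.1)
        calc ‖(lamb x • J (((1 - lamb x) / lamb x) • u x)) -
            (mub x • J (((1 - mub x) / mub x) • v x))‖
            ≤ ‖(lamb x • J (((1 - lamb x) / lamb x) • u x)) -
                (mub x • J (((1 - mub x) / mub x) • u x))‖ +
              ‖(mub x • J (((1 - mub x) / mub x) • u x)) -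
                (mub x • J (((1 - mub x) / mub x) • v x))‖ := by
              exact norm_sub_le_norm_sub_add_norm_sub _ _ _
          _ ≤ |lamb x - mub x| * (C + ‖u x‖) + (1 - mub x) * ‖u x - v x‖ :=
              add_le_add t1 t2
          _ = h x + (1 - mub x) * ‖u x - v x‖ := by rw [hhdef]; ring_nf
      have hμpos : 0 < mub x := hμ.1
      have : f' x ≤ h x - mub x * ‖u x - v x‖ := by
        simp only [hf'def]
        nlinarith [norm_nonneg (u x - v x)]
      have hfB' : ‖u x - v x‖ = B x := hfB
      rw [hfB'] at this
      show f' x < -mub x * B x + (h x + ε)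
      linarith
  -- pass to the limit ε → 0⁺
  have hgint : IntervalIntegrable (fun s => h s * Real.exp (M s)) MeasureTheory.volume 0 T := by
    apply ContinuousOn.intervalIntegrable
    rw [Set.uIcc_of_le hT]
    exact (hhcont.mono Set.Icc_subset_Ici_self).mul hEcont
  have hEint : IntervalIntegrable (fun s => Real.exp (M s)) MeasureTheory.volume 0 T := by
    apply ContinuousOn.intervalIntegrable
    rw [Set.uIcc_of_le hT]
    exact hEcont
  set K : ℝ := Real.exp (-M T) * (1 + ∫ s in (0:ℝ)..T, Real.exp (M s)) with hKdef
  have hK0 : 0 ≤ K := by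
    have : 0 ≤ ∫ s in (0:ℝ)..T, Real.exp (M s) :=
      intervalIntegral.integral_nonneg hT (fun s _ => (Real.exp_pos _).le)
    positivity
  have hsplit : ∀ ε : ℝ, 0 < ε →
      Real.exp (-M T) * (‖u 0 - v 0‖ + ε + ∫ s in (0:ℝ)..T, (h s + ε) * Real.exp (M s)) =
      Real.exp (-M T) * (‖u 0 - v 0‖ + ∫ s in (0:ℝ)..T, h s * Real.exp (M s)) + ε * K := by
    intro ε hε
    have : (∫ s in (0:ℝ)..T, (h s + ε) * Real.exp (M s)) =
        (∫ s in (0:ℝ)..T, h s * Real.exp (M s)) + ε * ∫ s in (0:ℝ)..T, Real.exp (M s) := by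
      rw [← intervalIntegral.integral_const_mul, ← intervalIntegral.integral_add hgint
        (hEint.const_mul ε)]
      congr 1; ext s; ring
    rw [this, hKdef]; ring
  -- conclude
  have final : ‖u T - v T‖ ≤
      Real.exp (-M T) * (‖u 0 - v 0‖ + ∫ s in (0:ℝ)..T, h s * Real.exp (M s)) := by
    refine le_of_forall_pos_le_add ?_
    intro δ hδ
    have hεpos : 0 < δ / (K + 1) := by positivity
    have h1 := key (δ / (K + 1)) hεpos
    rw [hsplit (δ / (K + 1)) hεpos] at h1
    have h2 : δ / (K + 1) * K ≤ δ := by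
      rw [div_mul_eq_mul_div, div_le_iff₀ (by linarith)]
      nlinarith
    linarith
  exact final
end

section
/- Let X be a real Banach space, J : X → X nonexpansive, and Φ(λ,x) = λ J(((1−λ)/λ) x) for λ ∈ (0,1], with v_λ the unique fixed point of Φ(λ,·). Assume hypothesis (H): there is a constant C ≥ 0 with ‖Φ(λ,x) − Φ(μ,x)‖ ≤ |λ − μ|(C + ‖x‖) for all x ∈ X and λ, μ ∈ (0,1]. Let (λ_n)_{n≥1} be a sequence in (0,1] such that λ_n → 0 and 1/λ_n − 1/λ_{n+1} → 0 as n → ∞, and let (w_n) be defined by w_n = Φ(λ_n, w_{n−1}) with arbitrary w_0 ∈ X. Then ‖v_{λ_n} − w_n‖ → 0 as n → ∞. -/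
open Filter Finset


private lemma seqA (t a c : ℕ → ℝ) (N0 : ℕ)
    (ht : ∀ n, N0 ≤ n → t n ∈ Set.Ioc (0:ℝ) 1)
    (ha : ∀ n, 0 ≤ a n)
    (hrec : ∀ n, N0 ≤ n → a (n+1) ≤ (1 - t (n+1)) * a n + t (n+1) * c n)
    (hc0 : Tendsto c atTop (nhds 0))
    (hdiv : ∀ N : ℕ, Tendsto (fun m => ∑ k ∈ Finset.range m, t (N + 1 + k)) atTop atTop) :
    Tendsto a atTop (nhds 0) := by
  rw [Metric.tendsto_atTop]
  intro ε hε
  obtain ⟨N2, hN2⟩ := (Metric.tendsto_atTop.mp hc0) (ε/2) (by linarith)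
  set N1 := max N0 N2 with hN1def
  have hN1N0 : N0 ≤ N1 := le_max_left _ _
  have hcb : ∀ n, N1 ≤ n → c n ≤ ε/2 := by
    intro n hn
    have := hN2 n (le_trans (le_max_right _ _) hn)
    rw [Real.dist_eq, sub_zero] at this
    exact le_of_lt (lt_of_abs_lt this)
  set P : ℕ → ℝ := fun m => ∏ k ∈ Finset.range m, (1 - t (N1 + 1 + k)) with hPdef
  have htm : ∀ k : ℕ, t (N1 + 1 + k) ∈ Set.Ioc (0:ℝ) 1 := by
    intro k; exact ht _ (by omega)
  have hPnonneg : ∀ m, 0 ≤ P m := by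
    intro m
    apply Finset.prod_nonneg
    intro k _
    have := (htm k).2; linarith
  have key : ∀ m, a (N1 + m) ≤ ε/2 + a N1 * P m := by
    intro m
    induction m with
    | zero => simp [hPdef]; linarith [ha N1]
    | succ m ih =>
      have hidx : N1 + m + 1 = N1 + 1 + m := by omega
      have h1 : a (N1 + m + 1) ≤ (1 - t (N1 + m + 1)) * a (N1 + m) + t (N1 + m + 1) * c (N1 + m) :=
        hrec (N1 + m) (by omega)
      have htk := htm m
      rw [hidx] at h1
      have ht0 : 0 < t (N1 + 1 + m) := htk.1
      have ht1 : t (N1 + 1 + m) ≤ 1 := htk.2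
      have h2 : (1 - t (N1 + 1 + m)) * a (N1 + m) ≤ (1 - t (N1 + 1 + m)) * (ε/2 + a N1 * P m) :=
        mul_le_mul_of_nonneg_left ih (by linarith)
      have h3 : t (N1 + 1 + m) * c (N1 + m) ≤ t (N1 + 1 + m) * (ε/2) :=
        mul_le_mul_of_nonneg_left (hcb _ (by omega)) (le_of_lt ht0)
      have hP : P (m+1) = P m * (1 - t (N1 + 1 + m)) := Finset.prod_range_succ _ _
      have hshift : N1 + (m+1) = N1 + 1 + m := by omega
      rw [hshift, hP]
      have haN1 := ha N1
      have hPm := hPnonneg m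
      nlinarith [h1, h2, h3]
  have hPexp : ∀ m, P m ≤ Real.exp (-(∑ k ∈ Finset.range m, t (N1 + 1 + k))) := by
    intro m
    have : P m ≤ ∏ k ∈ Finset.range m, Real.exp (-(t (N1 + 1 + k))) := by
      apply Finset.prod_le_prod
      · intro k _; have := (htm k).2; linarith
      · intro k _
        have := Real.add_one_le_exp (-(t (N1 + 1 + k)))
        linarith
    calc P m ≤ _ := this
      _ = Real.exp (-(∑ k ∈ Finset.range m, t (N1 + 1 + k))) := by
        rw [← Real.exp_sum]; congr 1; rw [Finset.sum_neg_distrib]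
  have hexp0 : Tendsto (fun m => a N1 * Real.exp (-(∑ k ∈ Finset.range m, t (N1 + 1 + k)))) atTop (nhds 0) := by
    have h1 : Tendsto (fun m => -(∑ k ∈ Finset.range m, t (N1 + 1 + k))) atTop atBot :=
      tendsto_neg_atTop_atBot.comp (hdiv N1)
    have h2 : Tendsto (fun m => Real.exp (-(∑ k ∈ Finset.range m, t (N1 + 1 + k)))) atTop (nhds 0) :=
      Real.tendsto_exp_atBot.comp h1
    simpa using h2.const_mul (a N1)
  obtain ⟨M, hM⟩ := (Metric.tendsto_atTop.mp hexp0) (ε/2) (by linarith)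
  refine ⟨N1 + M, fun n hn => ?_⟩
  have hm : n = N1 + (n - N1) := by omega
  have h1 := key (n - N1)
  have h2 := hM (n - N1) (by omega)
  rw [Real.dist_eq, sub_zero] at h2
  have h3 : a N1 * P (n - N1) ≤ a N1 * Real.exp (-(∑ k ∈ Finset.range (n - N1), t (N1 + 1 + k))) :=
    mul_le_mul_of_nonneg_left (hPexp _) (ha N1)
  have h4 : a N1 * Real.exp (-(∑ k ∈ Finset.range (n - N1), t (N1 + 1 + k))) < ε/2 :=
    lt_of_abs_lt h2
  rw [Real.dist_eq, sub_zero, abs_of_nonneg (ha n)]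
  rw [hm]
  linarith


private lemma sumdiv (lam : ℕ → ℝ)
    (hlam : ∀ n : ℕ, 1 ≤ n → lam n ∈ Set.Ioc (0 : ℝ) 1)
    (hslow : Tendsto (fun n : ℕ => 1 / lam n - 1 / lam (n + 1)) atTop (nhds 0)) :
    ∀ N : ℕ, Tendsto (fun m => ∑ k ∈ Finset.range m, lam (N + 1 + k)) atTop atTop := by
  intro N
  obtain ⟨N2', hN2'⟩ := (Metric.tendsto_atTop.mp hslow) 1 one_pos
  set N3 := max N2' 1 with hN3def
  have hN3ge1 : 1 ≤ N3 := le_max_right _ _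
  have hd : ∀ n, N3 ≤ n → |1 / lam n - 1 / lam (n+1)| ≤ 1 := by
    intro n hn
    have := hN2' n (le_trans (le_max_left _ _) hn)
    rw [Real.dist_eq, sub_zero] at this
    exact le_of_lt this
  -- claim1
  have claim1 : ∀ m : ℕ, 1 / lam (N3 + m) ≤ 1 / lam N3 + m := by
    intro m
    induction m with
    | zero => simp
    | succ m ih =>
      have h1 := hd (N3 + m) (by omega)
      have h2 : 1 / lam (N3 + m + 1) - 1 / lam (N3 + m) ≤ 1 := by
        have := abs_le.mp h1; linarith [this.1]
      have hshift : N3 + (m + 1) = N3 + m + 1 := by omega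
      rw [hshift]
      push_cast
      linarith
  have hne : (Finset.Icc 1 N3).Nonempty := ⟨1, by simp [hN3ge1]⟩
  set B : ℝ := (Finset.Icc 1 N3).sup' hne (fun j => 1 / lam j) with hBdef
  have hBge : ∀ j ∈ Finset.Icc 1 N3, 1 / lam j ≤ B := fun j hj => Finset.le_sup' (fun j => 1 / lam j) hj
  have hBpos : 0 < B := by
    have h1 : 1 / lam N3 ≤ B := hBge N3 (by simp [hN3ge1])
    have h2 : 0 < lam N3 := (hlam N3 hN3ge1).1
    have : 0 < 1 / lam N3 := by positivity
    linarith
  have claim2 : ∀ j : ℕ, 1 ≤ j → 1 / lam j ≤ B + j := by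
    intro j hj
    rcases le_total j N3 with h | h
    · have := hBge j (by simp [hj, h])
      have : (0:ℝ) ≤ j := Nat.cast_nonneg j
      linarith [hBge j (Finset.mem_Icc.mpr ⟨hj, h⟩)]
    · obtain ⟨m, rfl⟩ := Nat.exists_eq_add_of_le h
      have h1 := claim1 m
      have h2 : 1 / lam N3 ≤ B := hBge N3 (by simp [hN3ge1])
      push_cast
      have : (0:ℝ) ≤ N3 := Nat.cast_nonneg N3
      linarith
  have claim3 : ∀ j : ℕ, 1 ≤ j → 1 / (B + j) ≤ lam j := by
    intro j hj
    have hl := (hlam j hj).1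
    have h2 := claim2 j hj
    have hBj : 0 < B + (j:ℝ) := by
      have : (0:ℝ) ≤ j := Nat.cast_nonneg j
      linarith
    rw [div_le_iff₀ hBj]
    have h4 : (1:ℝ) ≤ lam j * (B + j) := by
      have := (div_le_iff₀ hl).mp h2
      nlinarith
    linarith
  set M : ℝ := B + N + 1 with hMdef
  have hM1 : 1 ≤ M := by
    have : (0:ℝ) ≤ N := Nat.cast_nonneg N
    simp only [hMdef]; linarith
  have hMpos : 0 < M := by linarith
  have pointwise : ∀ k : ℕ, (1/M) * (1 / (k + 1)) ≤ lam (N + 1 + k) := by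
    intro k
    have h3 := claim3 (N + 1 + k) (by omega)
    have hk : (0:ℝ) ≤ k := Nat.cast_nonneg k
    have hN : (0:ℝ) ≤ N := Nat.cast_nonneg N
    have hcast : ((N + 1 + k : ℕ) : ℝ) = (N:ℝ) + 1 + k := by push_cast; ring
    rw [hcast] at h3
    have hle : B + ((N:ℝ) + 1 + k) ≤ M * (k + 1) := by
      simp only [hMdef]; nlinarith
    have hpos1 : (0:ℝ) < B + ((N:ℝ) + 1 + k) := by linarith
    have hpos2 : (0:ℝ) < M * (k+1) := by nlinarith
    have := one_div_le_one_div_of_le hpos1 hle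
    calc (1/M) * (1 / (k + 1)) = 1 / (M * (k+1)) := by
          rw [one_div_mul_one_div]
      _ ≤ 1 / (B + ((N:ℝ) + 1 + k)) := this
      _ ≤ lam (N + 1 + k) := h3
  have hharm : Tendsto (fun m => (1/M) * ∑ k ∈ Finset.range m, (1 / ((k:ℝ) + 1))) atTop atTop :=
    Tendsto.const_mul_atTop (by positivity) Real.tendsto_sum_range_one_div_nat_succ_atTop
  apply tendsto_atTop_mono _ hharm
  intro m
  rw [Finset.mul_sum]
  exact Finset.sum_le_sum (fun k _ => pointwise k)


/-- under hypothesis (H), if `(λ_n)` is a sequence in `(0,1]` with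
`λ_n → 0` and `1/λ_n - 1/λ_{n+1} → 0`, then the discrete scheme
`w_n = Φ(λ_n, w_{n-1})` (with `Φ(λ,x) = λ J(((1-λ)/λ)x)` and fixed points `v_λ`)
satisfies `‖v_{λ_n} - w_n‖ → 0`. -/
theorem discrete_slow_scheme_tracks_vlambda
    {X : Type*} [NormedAddCommGroup X] [NormedSpace ℝ X] [CompleteSpace X]
    (J : X → X) (hJ : ∀ x y : X, ‖J x - J y‖ ≤ ‖x - y‖)
    (v : ℝ → X)
    (hv : ∀ lam ∈ Set.Ioc (0 : ℝ) 1,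
      lam • J (((1 - lam) / lam) • v lam) = v lam)
    (C : ℝ) (hC : 0 ≤ C)
    (hH : ∀ (x : X), ∀ lam ∈ Set.Ioc (0 : ℝ) 1, ∀ mu ∈ Set.Ioc (0 : ℝ) 1,
      ‖lam • J (((1 - lam) / lam) • x) - mu • J (((1 - mu) / mu) • x)‖ ≤
        |lam - mu| * (C + ‖x‖))
    (lam : ℕ → ℝ)
    (hlam : ∀ n : ℕ, 1 ≤ n → lam n ∈ Set.Ioc (0 : ℝ) 1)
    (hlam0 : Tendsto (fun n : ℕ => lam n) atTop (nhds 0))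
    (hslow : Tendsto (fun n : ℕ => 1 / lam n - 1 / lam (n + 1)) atTop (nhds 0))
    (w : ℕ → X)
    (hw : ∀ n : ℕ, 1 ≤ n →
      w n = lam n • J (((1 - lam n) / lam n) • w (n - 1))) :
    Tendsto (fun n : ℕ => ‖v (lam n) - w n‖) atTop (nhds 0) := by
  -- contraction property of Φ(mu, ·)
  have contr : ∀ mu ∈ Set.Ioc (0:ℝ) 1, ∀ x y : X,
      ‖mu • J (((1 - mu)/mu) • x) - mu • J (((1 - mu)/mu) • y)‖ ≤ (1 - mu) * ‖x - y‖ := by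
    intro mu hmu x y
    obtain ⟨h0, h1⟩ := hmu
    have hc : (0:ℝ) ≤ (1 - mu)/mu := div_nonneg (by linarith) (le_of_lt h0)
    calc ‖mu • J (((1 - mu)/mu) • x) - mu • J (((1 - mu)/mu) • y)‖
        = ‖mu‖ * ‖J (((1 - mu)/mu) • x) - J (((1 - mu)/mu) • y)‖ := by
          rw [← smul_sub, norm_smul]
      _ ≤ mu * ‖((1 - mu)/mu) • x - ((1 - mu)/mu) • y‖ := by
          rw [Real.norm_eq_abs, abs_of_pos h0]
          exact mul_le_mul_of_nonneg_left (hJ _ _) (le_of_lt h0)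
      _ = mu * (((1 - mu)/mu) * ‖x - y‖) := by
          rw [← smul_sub, norm_smul, Real.norm_eq_abs, abs_of_nonneg hc]
      _ = (1 - mu) * ‖x - y‖ := by
          field_simp
  -- bound on v
  have hvb : ∀ mu ∈ Set.Ioc (0:ℝ) 1, ‖v mu‖ ≤ ‖J 0‖ := by
    intro mu hmu
    obtain ⟨h0, h1⟩ := hmu
    have hfix := hv mu ⟨h0, h1⟩
    have h2 : ‖v mu - mu • J (((1 - mu)/mu) • (0:X))‖ ≤ (1 - mu) * ‖v mu - 0‖ := by
      conv_lhs => rw [← hfix]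
      exact contr mu ⟨h0, h1⟩ _ _
    rw [smul_zero, sub_zero] at h2
    have h3 : ‖mu • J (0:X)‖ = mu * ‖J 0‖ := by
      rw [norm_smul, Real.norm_eq_abs, abs_of_pos h0]
    have h4 : ‖v mu‖ ≤ ‖v mu - mu • J (0:X)‖ + ‖mu • J (0:X)‖ := by
      have he : v mu = (v mu - mu • J (0:X)) + mu • J (0:X) := by abel
      calc ‖v mu‖ = ‖(v mu - mu • J (0:X)) + mu • J (0:X)‖ := by rw [← he]
        _ ≤ _ := norm_add_le _ _
    rw [h3] at h4
    nlinarith [norm_nonneg (v mu)]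
  set K : ℝ := C + ‖J 0‖ with hKdef
  have hK0 : 0 ≤ K := by have := norm_nonneg (J 0); simp only [hKdef]; linarith
  -- resolvent-type estimate
  have hvdiff : ∀ l ∈ Set.Ioc (0:ℝ) 1, ∀ mu ∈ Set.Ioc (0:ℝ) 1,
      mu * ‖v l - v mu‖ ≤ |l - mu| * K := by
    intro l hl mu hmu
    have hA : ‖v l - v mu‖ ≤ |l - mu| * (C + ‖v l‖) + (1 - mu) * ‖v l - v mu‖ := by
      have htri : v l - v mu =
          (l • J (((1 - l)/l) • v l) - mu • J (((1 - mu)/mu) • v l)) +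
          (mu • J (((1 - mu)/mu) • v l) - mu • J (((1 - mu)/mu) • v mu)) := by
        rw [hv l hl, hv mu hmu]; abel
      calc ‖v l - v mu‖ = ‖_ + _‖ := by rw [htri]
        _ ≤ ‖l • J (((1 - l)/l) • v l) - mu • J (((1 - mu)/mu) • v l)‖ +
            ‖mu • J (((1 - mu)/mu) • v l) - mu • J (((1 - mu)/mu) • v mu)‖ := norm_add_le _ _
        _ ≤ |l - mu| * (C + ‖v l‖) + (1 - mu) * ‖v l - v mu‖ :=
            add_le_add (hH (v l) l hl mu hmu) (contr mu hmu _ _)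
    have hvl := hvb l hl
    have habs : (0:ℝ) ≤ |l - mu| := abs_nonneg _
    have : |l - mu| * (C + ‖v l‖) ≤ |l - mu| * K := by
      apply mul_le_mul_of_nonneg_left _ habs
      simp only [hKdef]; linarith
    nlinarith
  -- the correction sequence
  set d : ℕ → ℝ := fun n => 1 / lam n - 1 / lam (n + 1) with hddef
  set c : ℕ → ℝ := fun n => (1 - lam n * d n) * |d n| * K with hcdef
  have hc0 : Tendsto c atTop (nhds 0) := by
    have h1 : Tendsto (fun n => (1 - lam n * d n) * |d n| * K) atTop
        (nhds ((1 - 0 * 0) * |(0:ℝ)| * K)) :=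
      (((tendsto_const_nhds.sub (hlam0.mul hslow)).mul hslow.abs)).mul tendsto_const_nhds
    simpa using h1
  -- recursion
  have hrec : ∀ n, 1 ≤ n → ‖v (lam (n+1)) - w (n+1)‖ ≤
      (1 - lam (n+1)) * ‖v (lam n) - w n‖ + lam (n+1) * c n := by
    intro n hn
    have hln := hlam n hn
    have hln1 := hlam (n+1) (by omega)
    have hw1 : w (n+1) = lam (n+1) • J (((1 - lam (n+1))/lam (n+1)) • w n) := by
      have := hw (n+1) (by omega)
      simpa using this
    have step1 : ‖v (lam (n+1)) - w (n+1)‖ ≤ (1 - lam (n+1)) * ‖v (lam (n+1)) - w n‖ := by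
      calc ‖v (lam (n+1)) - w (n+1)‖
          = ‖lam (n+1) • J (((1 - lam (n+1))/lam (n+1)) • v (lam (n+1))) -
             lam (n+1) • J (((1 - lam (n+1))/lam (n+1)) • w n)‖ := by
            rw [hv (lam (n+1)) hln1, ← hw1]
        _ ≤ (1 - lam (n+1)) * ‖v (lam (n+1)) - w n‖ := contr _ hln1 _ _
    have step2 : ‖v (lam (n+1)) - w n‖ ≤ ‖v (lam (n+1)) - v (lam n)‖ + ‖v (lam n) - w n‖ := by
      have he : v (lam (n+1)) - w n = (v (lam (n+1)) - v (lam n)) + (v (lam n) - w n) := by abel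
      rw [he]; exact norm_add_le _ _
    have hl0 := hln.1
    have hl10 := hln1.1
    have habsd : |lam n - lam (n+1)| = lam n * lam (n+1) * |d n| := by
      have h : lam (n+1) - lam n = lam n * lam (n+1) * d n := by
        simp only [hddef]; field_simp
      rw [abs_sub_comm, h, abs_mul, abs_of_pos (mul_pos hl0 hl10)]
    have step3 : ‖v (lam (n+1)) - v (lam n)‖ ≤ lam n * |d n| * K := by
      have h1 := hvdiff (lam n) hln (lam (n+1)) hln1
      rw [habsd] at h1
      rw [norm_sub_rev]
      nlinarith [norm_nonneg (v (lam n) - v (lam (n+1)))]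
    have step4 : lam (n+1) * c n = lam n * |d n| * K := by
      have h1 : 1 - lam n * d n = lam n / lam (n+1) := by
        simp only [hddef]
        field_simp
        ring
      simp only [hcdef, h1]
      field_simp
    have hd0 : (0:ℝ) ≤ lam n * |d n| * K := by positivity
    have hl11 := hln1.2
    nlinarith [step1, step2, step3, norm_nonneg (v (lam n) - w n)]
  exact seqA lam (fun n => ‖v (lam n) - w n‖) c 1 hlam (fun n => norm_nonneg _) hrec hc0
    (sumdiv lam hlam hslow)
end
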